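/- Let R and S be nonnegative real vectors in ℝ^n with equal component sums. There exists an n×n nonnegative real matrix A with row sum vector R and column sum vector S that is invariant under transposition about the antidiagonal (i.e. a_{i,j} = a_{n+1−j, n+1−i} for all i,j) if and only if S = R^r, the reversal of R. Moreover, if R and S have nonnegative integer components, there exists such a matrix with nonnegative integer entries if and only if S = R^r. -/
import Mathlib


/-- **Transportation with antidiagonal-transposition symmetry (`r_{+1}`).**
`𝒯^{+1}(R,S) ≠ ∅` iff `S = Rʳ` (the reversal of `R`), and the same for the
integral class `𝒯^{+1}_ℤ(R,S)`. -/
theorem antisymmetric_transportation (n : ℕ) (R S : Fin n → ℝ)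
    (hR : ∀ i, 0 ≤ R i) (hS : ∀ j, 0 ≤ S j)
    (hsum : ∑ i, R i = ∑ j, S j) :
    ((∃ A : Matrix (Fin n) (Fin n) ℝ,
        (∀ i j, 0 ≤ A i j) ∧
        (∀ i, ∑ j, A i j = R i) ∧
        (∀ j, ∑ i, A i j = S j) ∧
        (∀ i j, A i j = A j.rev i.rev)) ↔ (∀ j, S j = R j.rev))
    ∧ ((∀ i, ∃ k : ℕ, R i = k) → (∀ j, ∃ k : ℕ, S j = k) →
      ((∃ A : Matrix (Fin n) (Fin n) ℕ,
          (∀ i, ((∑ j, A i j : ℕ) : ℝ) = R i) ∧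
          (∀ j, ((∑ i, A i j : ℕ) : ℝ) = S j) ∧
          (∀ i j, A i j = A j.rev i.rev)) ↔ (∀ j, S j = R j.rev))) := by
  constructor
  · constructor
    · rintro ⟨A, _, hrow, hcol, hsym⟩ j
      have : R j.rev = ∑ k, A k j := by
        rw [← hrow j.rev]
        refine Fintype.sum_equiv Fin.revPerm _ _ fun k => ?_
        rw [hsym (Fin.revPerm k) j]
        simp
      rw [← hcol j, this]
    · intro h
      refine ⟨fun i j => if j = i.rev then R i else 0, fun i j => ?_, fun i => ?_,
        fun j => ?_, fun i j => ?_⟩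
      · dsimp only; split; exacts [hR i, le_refl 0]
      · simp
      · rw [h j]
        rw [Finset.sum_eq_single j.rev] <;> simp +contextual [Fin.rev_eq_iff]
        intro b h1 h2; exact absurd (by simp [h2]) h1
      · dsimp only
        by_cases hij : j = i.rev
        · simp [hij, Fin.rev_rev]
        · rw [if_neg hij, if_neg]
          simp [Fin.rev_eq_iff]
          intro hc; exact hij (by simp [hc])
  · intro hRℤ hSℤ
    constructor
    · rintro ⟨A, hrow, hcol, hsym⟩ j
      have : R j.rev = ((∑ k, A k j : ℕ) : ℝ) := by
        rw [← hrow j.rev]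
        norm_cast
        refine Fintype.sum_equiv Fin.revPerm _ _ fun k => ?_
        rw [hsym (Fin.revPerm k) j]
        simp
      rw [← hcol j, this]
    · intro h
      choose f hf using hRℤ
      refine ⟨fun i j => if j = i.rev then f i else 0, fun i => ?_, fun j => ?_,
        fun i j => ?_⟩
      · simp [hf]
      · rw [h j, hf j.rev]
        norm_cast
        rw [Finset.sum_eq_single j.rev] <;> simp +contextual [Fin.rev_eq_iff]
        intro b h1 h2; exact absurd (by simp [h2]) h1
      · dsimp only
        by_cases hij : j = i.rev
        · simp [hij, Fin.rev_rev]
        · rw [if_neg hij, if_neg]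
          simp [Fin.rev_eq_iff]
          intro hc; exact hij (by simp [hc])
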